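/- (Bregman–Minc inequality) For an n×n 0-1 matrix A with row sums r_1, ..., r_n, the permanent of A satisfies perm(A) ≤ Π_{i=1}^n (r_i!)^(1/r_i), with the convention that a row of zeros makes the right side zero (and the permanent is then zero). -/

import Mathlib

open Finset

section Aux
open Real

lemma pow_self_eq_exp (m : ℕ) : ((m : ℝ)) ^ m = Real.exp (m * Real.log m) := by
  rcases Nat.eq_zero_or_pos m with rfl | hm
  · simp
  · have h : (0:ℝ) < m := by exact_mod_cast hm
    rw [← Real.log_pow, Real.exp_log (by positivity)]

lemma conv_lemma {β : Type*} (K : Finset β) (t : β → ℕ) :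
    ((∑ k ∈ K, t k : ℕ) : ℝ) ^ (∑ k ∈ K, t k) ≤
      (K.card : ℝ) ^ (∑ k ∈ K, t k) * ∏ k ∈ K, ((t k : ℝ)) ^ (t k) := by
  rcases K.eq_empty_or_nonempty with rfl | hK
  · simp
  set S := ∑ k ∈ K, t k with hS
  have hr : (0:ℝ) < K.card := by
    have := hK.card_pos; exact_mod_cast this
  have key : (S:ℝ) * Real.log S ≤ (S:ℝ) * Real.log K.card + ∑ k ∈ K, (t k : ℝ) * Real.log (t k) := by
    have hj := Real.convexOn_mul_log.map_sum_le (t := K) (w := fun _ => (K.card : ℝ)⁻¹)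
      (p := fun k => (t k : ℝ)) (fun i _ => by positivity)
      (by rw [Finset.sum_const, nsmul_eq_mul]; field_simp)
      (fun i _ => Set.mem_Ici.mpr (by positivity))
    simp only [smul_eq_mul] at hj
    have hsum : ∑ k ∈ K, (t k : ℝ) = (S : ℝ) := by rw [hS]; push_cast; ring
    rw [← Finset.mul_sum, hsum] at hj
    have h2 : ((K.card:ℝ)⁻¹ * S) * Real.log ((K.card:ℝ)⁻¹ * S) ≤
        (K.card:ℝ)⁻¹ * ∑ k ∈ K, (t k : ℝ) * Real.log (t k) := by
      rw [Finset.mul_sum]; exact hj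
    rcases Nat.eq_zero_or_pos S with h0 | hpos
    · simp [h0]
      calc (0:ℝ) = ∑ k ∈ K, (0:ℝ) := by simp
        _ ≤ ∑ k ∈ K, (t k : ℝ) * Real.log (t k) := by
          apply Finset.sum_le_sum
          intro k hk
          rcases Nat.eq_zero_or_pos (t k) with h | h
          · simp [h]
          · have : (1:ℝ) ≤ (t k : ℝ) := by exact_mod_cast h
            have := Real.log_nonneg this
            positivity
    · have hSpos : (0:ℝ) < S := by exact_mod_cast hpos
      rw [Real.log_mul (by positivity) (by positivity), Real.log_inv] at h2
      have h3 : (S:ℝ) * (-Real.log K.card + Real.log S) ≤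
          ∑ k ∈ K, (t k : ℝ) * Real.log (t k) := by
        have h4 := mul_le_mul_of_nonneg_left h2 hr.le
        calc (S:ℝ) * (-Real.log K.card + Real.log S)
            = (K.card:ℝ) * ((K.card:ℝ)⁻¹ * S * (-Real.log K.card + Real.log S)) := by
              field_simp
          _ ≤ (K.card:ℝ) * ((K.card:ℝ)⁻¹ * ∑ k ∈ K, (t k : ℝ) * Real.log (t k)) := h4
          _ = ∑ k ∈ K, (t k : ℝ) * Real.log (t k) := by field_simp
      linarith
  -- exponentiate
  have hL : ((S:ℕ):ℝ) ^ S = Real.exp ((S:ℝ) * Real.log S) := pow_self_eq_exp S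
  have hP : ∏ k ∈ K, ((t k : ℝ)) ^ (t k) = Real.exp (∑ k ∈ K, (t k : ℝ) * Real.log (t k)) := by
    rw [Real.exp_sum]
    exact Finset.prod_congr rfl (fun k _ => pow_self_eq_exp (t k))
  have hR : (K.card : ℝ) ^ S = Real.exp ((S:ℝ) * Real.log K.card) := by
    rw [← Real.log_pow, Real.exp_log (by positivity)]
  rw [hL, hP, hR, ← Real.exp_add]
  exact Real.exp_le_exp.mpr key

end Aux

variable {α : Type*} [Fintype α] [DecidableEq α]

/-- The set of functions `f : α → α` that are "systems of distinct representatives" for `B`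
on `s`, extended by the identity outside `s`. -/
def SDR (s : Finset α) (B : α → Finset α) : Finset (α → α) :=
  univ.filter (fun f => (∀ j, if j ∈ s then f j ∈ B j else f j = j) ∧
    ∀ a ∈ s, ∀ b ∈ s, f a = f b → a = b)

lemma mem_SDR {s : Finset α} {B : α → Finset α} {f : α → α} :
    f ∈ SDR s B ↔ (∀ j, if j ∈ s then f j ∈ B j else f j = j) ∧
      ∀ a ∈ s, ∀ b ∈ s, f a = f b → a = b := by
  simp [SDR]

lemma SDR_empty (B : α → Finset α) : SDR (∅ : Finset α) B = {id} := by
  ext f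
  simp only [mem_SDR, Finset.notMem_empty, if_false, Finset.mem_singleton]
  constructor
  · rintro ⟨h1, -⟩; funext x; exact h1 x
  · rintro rfl; exact ⟨fun j => rfl, fun a ha => ha.elim⟩

lemma fiber_card {s : Finset α} {B : α → Finset α} {i : α} (hi : i ∈ s) (k : α) (hk : k ∈ B i) :
    ((SDR s B).filter (fun f => f i = k)).card
      = (SDR (s.erase i) (fun j => (B j).erase k)).card := by
  apply Finset.card_bij (fun f _ => Function.update f i i)
  · rintro f hf
    rw [Finset.mem_filter] at hf
    obtain ⟨hf, hfi⟩ := hf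
    rw [mem_SDR] at hf
    obtain ⟨h1, h2⟩ := hf
    rw [mem_SDR]
    constructor
    · intro j
      by_cases hj : j ∈ s.erase i
      · have hji : j ≠ i := (Finset.mem_erase.mp hj).1
        have hjs : j ∈ s := (Finset.mem_erase.mp hj).2
        simp only [hj, if_true, Function.update_of_ne hji]
        refine Finset.mem_erase.mpr ⟨?_, by simpa [hjs] using h1 j⟩
        intro hE
        exact hji (h2 j hjs i hi (hE.trans hfi.symm))
      · simp only [hj, if_false]
        by_cases hji : j = i
        · subst hji; simp [Function.update_self]
        · rw [Function.update_of_ne hji]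
          have : j ∉ s := fun hjs => hj (Finset.mem_erase.mpr ⟨hji, hjs⟩)
          simpa [this] using h1 j
    · intro a ha b hb hab
      have hai : a ≠ i := (Finset.mem_erase.mp ha).1
      have hbi : b ≠ i := (Finset.mem_erase.mp hb).1
      rw [Function.update_of_ne hai, Function.update_of_ne hbi] at hab
      exact h2 a (Finset.mem_erase.mp ha).2 b (Finset.mem_erase.mp hb).2 hab
  · rintro f hf g hg hfg
    rw [Finset.mem_filter] at hf hg
    funext x
    by_cases hx : x = i
    · subst hx; rw [hf.2, hg.2]
    · have := congrFun hfg x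
      rwa [Function.update_of_ne hx, Function.update_of_ne hx] at this
  · rintro g hg
    rw [mem_SDR] at hg
    obtain ⟨h1, h2⟩ := hg
    have hgi : g i = i := by simpa [Finset.notMem_erase i s] using h1 i
    refine ⟨Function.update g i k, ?_, ?_⟩
    · rw [Finset.mem_filter, mem_SDR]
      refine ⟨⟨?_, ?_⟩, Function.update_self i k g⟩
      · intro j
        by_cases hji : j = i
        · subst hji; simp [Function.update_self, hi, hk]
        · rw [Function.update_of_ne hji]
          by_cases hjs : j ∈ s
          · have hje : j ∈ s.erase i := Finset.mem_erase.mpr ⟨hji, hjs⟩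
            have := h1 j
            simp only [hje, if_true] at this
            simp only [hjs, if_true]
            exact Finset.mem_of_mem_erase this
          · have : j ∉ s.erase i := fun h => hjs (Finset.mem_of_mem_erase h)
            simpa [hjs, this] using h1 j
      · intro a ha b hb hab
        by_cases hai : a = i <;> by_cases hbi : b = i
        · rw [hai, hbi]
        · exfalso
          rw [hai, Function.update_self, Function.update_of_ne hbi] at hab
          have hbe : b ∈ s.erase i := Finset.mem_erase.mpr ⟨hbi, hb⟩
          have := h1 b
          simp only [hbe, if_true] at this
          exact (Finset.mem_erase.mp this).1 hab.symm
        · exfalso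
          rw [hbi, Function.update_self, Function.update_of_ne hai] at hab
          have hae : a ∈ s.erase i := Finset.mem_erase.mpr ⟨hai, ha⟩
          have := h1 a
          simp only [hae, if_true] at this
          exact (Finset.mem_erase.mp this).1 hab
        · rw [Function.update_of_ne hai, Function.update_of_ne hbi] at hab
          exact h2 a (Finset.mem_erase.mpr ⟨hai, ha⟩) b (Finset.mem_erase.mpr ⟨hbi, hb⟩) hab
    · funext x
      by_cases hx : x = i
      · subst hx; simp [Function.update_self, hgi]
      · simp [Function.update_of_ne hx]

lemma SDR_recursion {s : Finset α} {B : α → Finset α} {i : α} (hi : i ∈ s) :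
    (SDR s B).card = ∑ k ∈ B i, (SDR (s.erase i) (fun j => (B j).erase k)).card := by
  have h := Finset.card_eq_sum_card_fiberwise (f := fun f => f i) (s := SDR s B) (t := B i)
    (fun f hf => by
      rw [Finset.mem_coe, mem_SDR] at hf
      simpa [hi] using hf.1 i)
  rw [h]
  exact Finset.sum_congr rfl (fun k hk => fiber_card hi k hk)

lemma hit_count {s t : Finset α} {B : α → Finset α} (hB : ∀ j ∈ s, B j ⊆ t)
    (hst : s.card = t.card) {f : α → α} (hf : f ∈ SDR s B) {j : α} (hj : j ∈ s) :
    ((s.erase j).filter (fun i => f i ∈ B j)).card = (B j).card - 1 := by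
  rw [mem_SDR] at hf
  obtain ⟨h1, h2⟩ := hf
  have hmem : ∀ a ∈ s, f a ∈ B a := fun a ha => by simpa [ha] using h1 a
  have himg : s.image f = t := by
    apply Finset.eq_of_subset_of_card_le
    · intro x hx
      obtain ⟨a, ha, rfl⟩ := Finset.mem_image.mp hx
      exact hB a ha (hmem a ha)
    · rw [Finset.card_image_of_injOn (fun a ha b hb => h2 a ha b hb), hst]
  have hfj : f j ∈ B j := hmem j hj
  have : ((s.erase j).filter (fun i => f i ∈ B j)).card = ((B j).erase (f j)).card := by
    apply Finset.card_bij (fun i _ => f i)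
    · rintro i hi
      rw [Finset.mem_filter] at hi
      refine Finset.mem_erase.mpr ⟨?_, hi.2⟩
      intro hE
      exact (Finset.mem_erase.mp hi.1).1 (h2 i (Finset.mem_of_mem_erase hi.1) j hj hE)
    · rintro a ha b hb hab
      rw [Finset.mem_filter] at ha hb
      exact h2 a (Finset.mem_of_mem_erase ha.1) b (Finset.mem_of_mem_erase hb.1) hab
    · rintro k hk
      have hkB : k ∈ B j := Finset.mem_of_mem_erase hk
      have hkt : k ∈ t := hB j hj hkB
      rw [← himg, Finset.mem_image] at hkt
      obtain ⟨a, ha, rfl⟩ := hkt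
      have haj : a ≠ j := by
        intro h; subst h; exact (Finset.mem_erase.mp hk).1 rfl
      exact ⟨a, Finset.mem_filter.mpr ⟨Finset.mem_erase.mpr ⟨haj, ha⟩, hkB⟩, rfl⟩
  rw [this, Finset.card_erase_of_mem hfj]


lemma prod_erase_comm {α : Type*} [DecidableEq α] (s : Finset α) (g : α → α → ℝ) :
    ∏ i ∈ s, ∏ j ∈ s.erase i, g i j = ∏ j ∈ s, ∏ i ∈ s.erase j, g i j := by
  have he : ∀ i : α, s.erase i = s.filter (fun j => j ≠ i) := by
    intro i; ext j; simp [Finset.mem_erase, and_comm]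
  calc ∏ i ∈ s, ∏ j ∈ s.erase i, g i j
      = ∏ i ∈ s, ∏ j ∈ s, if j ≠ i then g i j else 1 := by
        refine Finset.prod_congr rfl (fun i _ => ?_)
        rw [he i, Finset.prod_filter]
    _ = ∏ j ∈ s, ∏ i ∈ s, if j ≠ i then g i j else 1 := Finset.prod_comm
    _ = ∏ j ∈ s, ∏ i ∈ s.erase j, g i j := by
        refine Finset.prod_congr rfl (fun j _ => ?_)
        have : s.erase j = s.filter (fun i => j ≠ i) := by
          ext i; simp [Finset.mem_erase, and_comm, eq_comm, ne_comm]
        rw [this, Finset.prod_filter]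

lemma key_calc (r m : ℕ) (hr : 1 ≤ r) (hrm : r ≤ m + 1) :
    (r : ℝ) * ((((r - 1).factorial : ℝ)) ^ ((1:ℝ) / ((r - 1 : ℕ) : ℝ))) ^ (r - 1)
        * (((r.factorial : ℝ)) ^ ((1:ℝ) / (r : ℝ))) ^ (m + 1 - r)
      = (((r.factorial : ℝ)) ^ ((1:ℝ) / (r : ℝ))) ^ (m + 1) := by
  rcases Nat.lt_or_ge r 2 with h2 | h2
  · interval_cases r
    simp [Nat.factorial]
  · have hr1 : 1 ≤ r - 1 := by omega
    have hx : (0:ℝ) < ((r - 1).factorial : ℝ) := by positivity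
    have hy : (0:ℝ) < (r.factorial : ℝ) := by positivity
    have hrR : ((r:ℕ):ℝ) ≠ 0 := by positivity
    have hr1R : ((r - 1 : ℕ):ℝ) ≠ 0 := by
      have : (0:ℕ) < r - 1 := hr1
      positivity
    have e1 : ((((r - 1).factorial : ℝ)) ^ ((1:ℝ) / ((r - 1 : ℕ) : ℝ))) ^ (r - 1)
        = ((r - 1).factorial : ℝ) := by
      rw [← Real.rpow_natCast (_ ^ _) (r - 1), ← Real.rpow_mul hx.le, one_div,
        inv_mul_cancel₀ hr1R, Real.rpow_one]
    have e2 : (((r.factorial : ℝ)) ^ ((1:ℝ) / (r : ℝ))) ^ (m + 1 - r)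
        = ((r.factorial : ℝ)) ^ (((m + 1 - r : ℕ) : ℝ) / (r : ℝ)) := by
      rw [← Real.rpow_natCast (_ ^ _) (m + 1 - r), ← Real.rpow_mul hy.le, one_div,
        inv_mul_eq_div]
    have e3 : (((r.factorial : ℝ)) ^ ((1:ℝ) / (r : ℝ))) ^ (m + 1)
        = ((r.factorial : ℝ)) ^ (((m + 1 : ℕ) : ℝ) / (r : ℝ)) := by
      rw [← Real.rpow_natCast (_ ^ _) (m + 1), ← Real.rpow_mul hy.le, one_div,
        inv_mul_eq_div]
    rw [e1, e2, e3]
    have hfac : (r : ℝ) * ((r - 1).factorial : ℝ) = (r.factorial : ℝ) := by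
      have : r.factorial = r * (r - 1).factorial := by
        conv_lhs => rw [show r = (r - 1) + 1 by omega]
        rw [Nat.factorial_succ]
        congr 1
        omega
      rw [this]; push_cast; ring
    have hcast : ((m + 1 - r : ℕ) : ℝ) = ((m + 1 : ℕ) : ℝ) - (r : ℝ) := by
      push_cast [Nat.cast_sub hrm]; ring
    calc (r : ℝ) * ((r - 1).factorial : ℝ)
          * ((r.factorial : ℝ)) ^ (((m + 1 - r : ℕ) : ℝ) / (r : ℝ))
        = (r.factorial : ℝ) ^ (1:ℝ)
          * ((r.factorial : ℝ)) ^ (((m + 1 - r : ℕ) : ℝ) / (r : ℝ)) := by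
          rw [hfac, Real.rpow_one]
      _ = (r.factorial : ℝ) ^ ((1:ℝ) + ((m + 1 - r : ℕ) : ℝ) / (r : ℝ)) := by
          rw [← Real.rpow_add hy]
      _ = (r.factorial : ℝ) ^ (((m + 1 : ℕ) : ℝ) / (r : ℝ)) := by
          congr 1
          rw [hcast]
          field_simp
          ring


section Main
variable {α : Type*} [Fintype α] [DecidableEq α]

lemma bregman_main : ∀ (m : ℕ) (s t : Finset α) (B : α → Finset α), s.card = m → t.card = m →
    (∀ j ∈ s, B j ⊆ t) → 1 ≤ (SDR s B).card →
    ((SDR s B).card : ℝ) ≤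
      ∏ j ∈ s, ((B j).card.factorial : ℝ) ^ ((1:ℝ) / ((B j).card : ℝ)) := by
  intro m
  induction m with
  | zero =>
    intro s t B hs ht hB hN
    rw [Finset.card_eq_zero] at hs
    subst hs
    rw [SDR_empty]
    simp
  | succ m ih =>
    intro s t B hs ht hB hN
    set S := SDR s B with hS
    set N := S.card with hNdef
    set Φ : α → α → ℝ := fun j k =>
      if k ∈ B j then ((((B j).card - 1).factorial : ℝ)) ^ ((1:ℝ) / (((B j).card - 1 : ℕ) : ℝ))
      else (((B j).card.factorial : ℝ)) ^ ((1:ℝ) / ((B j).card : ℝ)) with hΦ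
    have hΦnonneg : ∀ j k, 0 ≤ Φ j k := by
      intro j k
      rw [hΦ]
      dsimp only
      split <;> positivity
    -- Step: for each i ∈ s
    have step : ∀ i ∈ s, ((N:ℝ))^N ≤ ∏ f ∈ S, (((B i).card : ℝ) * ∏ j ∈ s.erase i, Φ j (f i)) := by
      intro i hi
      set Nk : α → ℕ := fun k => (SDR (s.erase i) (fun j => (B j).erase k)).card with hNk
      have hrec : N = ∑ k ∈ B i, Nk k := SDR_recursion hi
      have h1 : ((N:ℝ))^N ≤ ((B i).card:ℝ)^N * ∏ k ∈ B i, ((Nk k : ℝ))^(Nk k) := by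
        calc ((N:ℝ))^N = ((∑ k ∈ B i, Nk k : ℕ) : ℝ) ^ (∑ k ∈ B i, Nk k) := by rw [← hrec]
          _ ≤ ((B i).card : ℝ) ^ (∑ k ∈ B i, Nk k) * ∏ k ∈ B i, ((Nk k : ℝ))^(Nk k) :=
            conv_lemma (B i) Nk
          _ = ((B i).card:ℝ)^N * ∏ k ∈ B i, ((Nk k : ℝ))^(Nk k) := by rw [← hrec]
      have h2 : ∏ k ∈ B i, ((Nk k : ℝ))^(Nk k) = ∏ f ∈ S, (Nk (f i) : ℝ) := by
        have hm : ∀ f ∈ S, f i ∈ B i := fun f hf => by simpa [hi] using (mem_SDR.mp hf).1 i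
        calc ∏ k ∈ B i, ((Nk k : ℝ))^(Nk k)
            = ∏ k ∈ B i, ∏ f ∈ S.filter (fun f => f i = k), (Nk k : ℝ) := by
              refine Finset.prod_congr rfl (fun k hk => ?_)
              rw [Finset.prod_const, fiber_card hi k hk]
          _ = ∏ f ∈ S, (Nk (f i) : ℝ) := Finset.prod_fiberwise_of_maps_to' hm _
      have h3 : ∀ f ∈ S, (Nk (f i) : ℝ) ≤ ∏ j ∈ s.erase i, Φ j (f i) := by
        intro f hf
        have hfi : f i ∈ B i := by simpa [hi] using (mem_SDR.mp hf).1 i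
        have hpos : 1 ≤ Nk (f i) := by
          rw [hNk]
          dsimp only
          rw [← fiber_card hi (f i) hfi]
          exact Finset.card_pos.mpr ⟨f, Finset.mem_filter.mpr ⟨hf, rfl⟩⟩
        have hIH := ih (s.erase i) (t.erase (f i)) (fun j => (B j).erase (f i))
          (by rw [Finset.card_erase_of_mem hi, hs]; omega)
          (by rw [Finset.card_erase_of_mem (hB i hi hfi), ht]; omega)
          (fun j hj => Finset.erase_subset_erase _ (hB j (Finset.mem_of_mem_erase hj)))
          hpos
        refine hIH.trans_eq (Finset.prod_congr rfl (fun j hj => ?_))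
        rw [hΦ]
        dsimp only
        by_cases hm : f i ∈ B j
        · rw [if_pos hm, Finset.card_erase_of_mem hm]
        · rw [if_neg hm, Finset.erase_eq_of_notMem hm]
      calc ((N:ℝ))^N ≤ ((B i).card:ℝ)^N * ∏ k ∈ B i, ((Nk k : ℝ))^(Nk k) := h1
        _ = ((B i).card:ℝ)^N * ∏ f ∈ S, (Nk (f i) : ℝ) := by rw [h2]
        _ ≤ ((B i).card:ℝ)^N * ∏ f ∈ S, ∏ j ∈ s.erase i, Φ j (f i) := by
            apply mul_le_mul_of_nonneg_left _ (by positivity)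
            exact Finset.prod_le_prod (fun f _ => by positivity) h3
        _ = ∏ f ∈ S, (((B i).card : ℝ) * ∏ j ∈ s.erase i, Φ j (f i)) := by
            rw [Finset.prod_mul_distrib, Finset.prod_const, hNdef]
    -- take the product over i ∈ s
    have big : ((N:ℝ))^((m+1)*N) ≤
        ∏ f ∈ S, ∏ j ∈ s, (((B j).card : ℝ) * ∏ i ∈ s.erase j, Φ j (f i)) := by
      calc ((N:ℝ))^((m+1)*N) = ∏ i ∈ s, ((N:ℝ))^N := by
            rw [Finset.prod_const, ← pow_mul, hs, Nat.mul_comm]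
        _ ≤ ∏ i ∈ s, ∏ f ∈ S, (((B i).card : ℝ) * ∏ j ∈ s.erase i, Φ j (f i)) :=
            Finset.prod_le_prod (fun i _ => by positivity) step
        _ = ∏ f ∈ S, ∏ i ∈ s, (((B i).card : ℝ) * ∏ j ∈ s.erase i, Φ j (f i)) :=
            Finset.prod_comm
        _ = ∏ f ∈ S, ((∏ i ∈ s, ((B i).card : ℝ)) * ∏ i ∈ s, ∏ j ∈ s.erase i, Φ j (f i)) := by
            exact Finset.prod_congr rfl (fun f _ => Finset.prod_mul_distrib)
        _ = ∏ f ∈ S, ((∏ j ∈ s, ((B j).card : ℝ)) * ∏ j ∈ s, ∏ i ∈ s.erase j, Φ j (f i)) := by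
            refine Finset.prod_congr rfl (fun f _ => ?_)
            rw [prod_erase_comm s (fun i j => Φ j (f i))]
        _ = ∏ f ∈ S, ∏ j ∈ s, (((B j).card : ℝ) * ∏ i ∈ s.erase j, Φ j (f i)) := by
            exact Finset.prod_congr rfl (fun f _ => Finset.prod_mul_distrib.symm)
    -- per (f, j) computation
    have perfj : ∀ f ∈ S, ∀ j ∈ s, ((B j).card : ℝ) * ∏ i ∈ s.erase j, Φ j (f i)
        = ((((B j).card.factorial : ℝ)) ^ ((1:ℝ) / ((B j).card : ℝ)))^(m+1) := by
      intro f hf j hj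
      have hfj : f j ∈ B j := by simpa [hj] using (mem_SDR.mp hf).1 j
      have hr1 : 1 ≤ (B j).card := Finset.card_pos.mpr ⟨f j, hfj⟩
      have hrm : (B j).card ≤ m + 1 := by
        rw [← ht]; exact Finset.card_le_card (hB j hj)
      have hcount : ((s.erase j).filter (fun i => f i ∈ B j)).card = (B j).card - 1 :=
        hit_count hB (by rw [hs, ht]) hf hj
      have hsplit : ∏ i ∈ s.erase j, Φ j (f i) =
          (∏ i ∈ (s.erase j).filter (fun i => f i ∈ B j), Φ j (f i)) *
          ∏ i ∈ (s.erase j).filter (fun i => ¬ f i ∈ B j), Φ j (f i) :=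
        (Finset.prod_filter_mul_prod_filter_not _ _ _).symm
      have hcount2 : ((s.erase j).filter (fun i => ¬ f i ∈ B j)).card = m + 1 - (B j).card := by
        have := Finset.card_filter_add_card_filter_not
          (s := s.erase j) (p := fun i => f i ∈ B j)
        have hce : (s.erase j).card = m := by rw [Finset.card_erase_of_mem hj, hs]; omega
        omega
      have h4 : ∏ i ∈ (s.erase j).filter (fun i => f i ∈ B j), Φ j (f i)
          = (((((B j).card - 1).factorial : ℝ)) ^ ((1:ℝ) / (((B j).card - 1 : ℕ) : ℝ)))
              ^ ((B j).card - 1) := by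
        have hc : ∀ i ∈ (s.erase j).filter (fun i => f i ∈ B j), Φ j (f i)
            = (((((B j).card - 1).factorial : ℝ)) ^ ((1:ℝ) / (((B j).card - 1 : ℕ) : ℝ))) := by
          intro i hi
          have := (Finset.mem_filter.mp hi).2
          rw [hΦ]; dsimp only; rw [if_pos this]
        rw [Finset.prod_congr rfl hc, Finset.prod_const, hcount]
      have h5 : ∏ i ∈ (s.erase j).filter (fun i => ¬ f i ∈ B j), Φ j (f i)
          = ((((B j).card.factorial : ℝ)) ^ ((1:ℝ) / ((B j).card : ℝ))) ^ (m + 1 - (B j).card) := by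
        have hc : ∀ i ∈ (s.erase j).filter (fun i => ¬ f i ∈ B j), Φ j (f i)
            = ((((B j).card.factorial : ℝ)) ^ ((1:ℝ) / ((B j).card : ℝ))) := by
          intro i hi
          have := (Finset.mem_filter.mp hi).2
          rw [hΦ]; dsimp only; rw [if_neg this]
        rw [Finset.prod_congr rfl hc, Finset.prod_const, hcount2]
      rw [hsplit, h4, h5, ← mul_assoc]
      exact key_calc (B j).card m hr1 hrm
    -- conclude
    set P : ℝ := ∏ j ∈ s, ((B j).card.factorial : ℝ) ^ ((1:ℝ) / ((B j).card : ℝ)) with hP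
    have hPnonneg : 0 ≤ P := by
      rw [hP]; exact Finset.prod_nonneg (fun j _ => by positivity)
    have final : ((N:ℝ))^((m+1)*N) ≤ P^((m+1)*N) := by
      calc ((N:ℝ))^((m+1)*N) ≤
          ∏ f ∈ S, ∏ j ∈ s, (((B j).card : ℝ) * ∏ i ∈ s.erase j, Φ j (f i)) := big
        _ = ∏ f ∈ S, ∏ j ∈ s, ((((B j).card.factorial : ℝ))
              ^ ((1:ℝ) / ((B j).card : ℝ)))^(m+1) := by
            refine Finset.prod_congr rfl (fun f hf => Finset.prod_congr rfl (fun j hj => ?_))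
            exact perfj f hf j hj
        _ = ∏ f ∈ S, P^(m+1) := by
            refine Finset.prod_congr rfl (fun f _ => ?_)
            rw [hP, ← Finset.prod_pow]
        _ = P^((m+1)*N) := by rw [Finset.prod_const, ← pow_mul, mul_comm]
    have hne : (m+1)*N ≠ 0 := by positivity
    exact le_of_pow_le_pow_left₀ hne hPnonneg final
end Main



/-- The Bregman–Minc inequality: for an `n × n` `0-1` matrix `A` with row sums
`r i`, the permanent of `A` is at most `∏ i, (r i)! ^ (1 / r i)`, with the
convention that a row of zeros makes the right-hand side zero. -/
theorem bregman_minc {n : ℕ} (A : Matrix (Fin n) (Fin n) ℕ)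
    (hA : ∀ i j, A i j = 0 ∨ A i j = 1) :
    (A.permanent : ℝ) ≤
      ∏ i : Fin n, if (∑ j, A i j) = 0 then (0 : ℝ)
        else ((∑ j, A i j).factorial : ℝ) ^ (1 / ((∑ j, A i j : ℕ) : ℝ)) := by
  classical
  set B : Fin n → Finset (Fin n) := fun i => univ.filter (fun j => A i j = 1) with hB
  have hsum : ∀ i, (∑ j, A i j) = (B i).card := by
    intro i
    rw [hB]
    dsimp only
    rw [Finset.card_filter]
    refine Finset.sum_congr rfl (fun j _ => ?_)
    rcases hA i j with h | h <;> simp [h]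
  have hperm : A.permanent = (SDR univ B).card := by
    have h1 : A.permanent = (univ.filter (fun σ : Equiv.Perm (Fin n) =>
        ∀ i, A (σ i) i = 1)).card := by
      rw [Matrix.permanent, Finset.card_filter]
      refine Finset.sum_congr rfl (fun σ _ => ?_)
      by_cases h : ∀ i, A (σ i) i = 1
      · rw [if_pos h]
        exact Finset.prod_eq_one (fun i _ => h i)
      · rw [if_neg h]
        push_neg at h
        obtain ⟨i, hi⟩ := h
        refine Finset.prod_eq_zero (Finset.mem_univ i) ?_
        rcases hA (σ i) i with h' | h'
        · exact h'
        · exact absurd h' hi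
    rw [h1]
    apply Finset.card_bij (fun (σ : Equiv.Perm (Fin n)) _ => (fun x => σ.symm x : Fin n → Fin n))
    · intro σ hσ
      rw [Finset.mem_filter] at hσ
      rw [mem_SDR]
      constructor
      · intro j
        simp only [Finset.mem_univ, if_true]
        refine Finset.mem_filter.mpr ⟨Finset.mem_univ _, ?_⟩
        have := hσ.2 (σ.symm j)
        rwa [Equiv.apply_symm_apply] at this
      · intro a _ b _ hab
        exact σ.symm.injective hab
    · intro σ _ τ _ h
      have : σ.symm = τ.symm := Equiv.coe_inj.mp h
      simpa using congrArg Equiv.symm this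
    · intro f hf
      rw [mem_SDR] at hf
      obtain ⟨h1', h2'⟩ := hf
      have hinj : Function.Injective f := fun a b hab =>
        h2' a (Finset.mem_univ a) b (Finset.mem_univ b) hab
      have hbij : Function.Bijective f := hinj.bijective_of_finite
      refine ⟨(Equiv.ofBijective f hbij).symm, ?_, ?_⟩
      · rw [Finset.mem_filter]
        refine ⟨Finset.mem_univ _, fun i => ?_⟩
        set e := Equiv.ofBijective f hbij
        have hfe : f (e.symm i) = i := e.apply_symm_apply i
        have := h1' (e.symm i)
        simp only [Finset.mem_univ, if_true] at this
        have h3 := (Finset.mem_filter.mp this).2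
        rw [hfe] at h3
        exact h3
      · rfl
  rcases Nat.eq_zero_or_pos A.permanent with h0 | hpos
  · rw [h0]
    push_cast
    refine Finset.prod_nonneg (fun i _ => ?_)
    split <;> positivity
  · have hN : 1 ≤ (SDR univ B).card := by rw [← hperm]; exact hpos
    have hBne : ∀ i, (B i).card ≠ 0 := by
      intro i
      obtain ⟨f, hf⟩ := Finset.card_pos.mp hN
      have := (mem_SDR.mp hf).1 i
      simp only [Finset.mem_univ, if_true] at this
      exact Finset.card_ne_zero_of_mem this
    have hmain := bregman_main n univ univ B (by simp) (by simp)
      (fun j _ => Finset.subset_univ _) hN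
    rw [hperm]
    refine hmain.trans_eq ?_
    refine (Finset.prod_congr rfl (fun i _ => ?_)).symm
    rw [if_neg (by rw [hsum i]; exact hBne i), hsum i]
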